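/- Let g be an odd, nondecreasing function on ℝ with g' nondecreasing on (0,∞) and g(0)=0. Then for all a, b ∈ ℝ, |g(a) − g(b)| ≤ |a − b| · g'(|a| + |b|), provided g is differentiable at the relevant points. -/

import Mathlib

private lemma deriv_even_of_odd (g : ℝ → ℝ) (hodd : ∀ x, g (-x) = -g x) (x : ℝ) :
    deriv g (-x) = deriv g x := by
  have h : g = fun y => -g (-y) := by
    funext y; rw [hodd, neg_neg]
  conv_rhs => rw [h]
  rw [deriv.fun_neg, deriv_comp_neg]
  ring

private lemma deriv_zero_le (g : ℝ → ℝ)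
    (hg0 : g 0 = 0)
    (hdiff : ∀ t, DifferentiableAt ℝ g t)
    (hderivmono : ∀ t1 t2 : ℝ, 0 < t1 → t1 ≤ t2 → deriv g t1 ≤ deriv g t2)
    {s : ℝ} (hs : 0 < s) : deriv g 0 ≤ deriv g s := by
  have hd := (hdiff 0).hasDerivAt
  rw [hasDerivAt_iff_tendsto_slope] at hd
  have hd' : Filter.Tendsto (slope g 0) (nhdsWithin 0 (Set.Ioi 0)) (nhds (deriv g 0)) :=
    hd.mono_left (nhdsWithin_mono _ (fun x hx => ne_of_gt hx))
  refine le_of_tendsto hd' ?_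
  filter_upwards [self_mem_nhdsWithin, Ioo_mem_nhdsGT_of_mem (Set.mem_Ico.mpr ⟨le_refl _, hs⟩)]
    with t ht ht'
  have ht0 : (0:ℝ) < t := ht
  obtain ⟨c, hc, hceq⟩ := exists_hasDerivAt_eq_slope g (deriv g) ht0
    (fun x _ => (hdiff x).continuousAt.continuousWithinAt)
    (fun x _ => (hdiff x).hasDerivAt)
  rw [slope_def_field]
  have : (g t - g 0) / (t - 0) ≤ deriv g s := by
    rw [← hceq]
    exact hderivmono c s hc.1 (le_of_lt (lt_trans hc.2 ht'.2))
  simpa [hg0] using this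

/-- For odd nondecreasing `g` with `g'` nondecreasing on `(0,∞)`,
`|g(a) − g(b)| ≤ |a − b| · g'(|a| + |b|)`. -/
theorem stmt5 (g : ℝ → ℝ)
    (hodd : ∀ x, g (-x) = -g x)
    (hmono : Monotone g)
    (hg0 : g 0 = 0)
    (hdiff : ∀ t, DifferentiableAt ℝ g t)
    (hderivmono : ∀ t1 t2 : ℝ, 0 < t1 → t1 ≤ t2 → deriv g t1 ≤ deriv g t2) :
    ∀ a b : ℝ, |g a - g b| ≤ |a - b| * deriv g (|a| + |b|) := by
  -- key lemma for ordered pairs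
  have key : ∀ a b : ℝ, b ≤ a → |g a - g b| ≤ |a - b| * deriv g (|a| + |b|) := by
    intro a b hba
    rcases eq_or_lt_of_le hba with heq | hlt
    · simp [heq]
    · obtain ⟨c, hc, hceq⟩ := exists_hasDerivAt_eq_slope g (deriv g) hlt
        (fun x _ => (hdiff x).continuousAt.continuousWithinAt)
        (fun x _ => (hdiff x).hasDerivAt)
      have hab : 0 < a - b := by linarith
      have hgab : g a - g b = (a - b) * deriv g c := by
        rw [hceq]; field_simp
      have hcle : deriv g c ≤ deriv g (|a| + |b|) := by
        rcases eq_or_ne c 0 with rfl | hc0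
        · apply deriv_zero_le g hg0 hdiff hderivmono
          have : a ≠ 0 ∨ b ≠ 0 := by
            by_contra h
            push_neg at h
            rw [h.1, h.2] at hlt; exact lt_irrefl 0 hlt
          rcases this with h | h
          · have := abs_pos.mpr h
            have := abs_nonneg b
            linarith
          · have := abs_pos.mpr h
            have := abs_nonneg a
            linarith
        · have heven : deriv g c = deriv g |c| := by
            rcases abs_choice c with h | h
            · rw [h]
            · rw [h, ← deriv_even_of_odd g hodd]
          rw [heven]
          apply hderivmono _ _ (abs_pos.mpr hc0)
          rcases le_or_gt 0 c with h | h
          · rw [abs_of_nonneg h]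
            have : c < |a| := lt_of_lt_of_le hc.2 (le_abs_self a)
            have := abs_nonneg b
            linarith
          · rw [abs_of_neg h]
            have : -c < |b| := lt_of_lt_of_le (neg_lt_neg hc.1) (neg_le_abs b)
            have := abs_nonneg a
            linarith
      have hgnn : 0 ≤ g a - g b := by
        have := hmono hba; linarith
      rw [abs_of_nonneg hgnn, abs_of_pos hab, hgab]
      exact mul_le_mul_of_nonneg_left hcle (le_of_lt hab)
  intro a b
  rcases le_total b a with h | h
  · exact key a b h
  · have := key b a h
    rw [abs_sub_comm (g a), abs_sub_comm a, add_comm |a|]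
    exact this
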